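/- For real t and β, the limit P(t,β) := lim_{n→∞} (1/n) log ∑_{ω∈ℕ^n} q_n(ω)^{−2t} ∏_{i=1}^n ω_i^{−2β} (with values in ℝ ∪ {+∞}) is finite if and only if 2(t+β) > 1. -/

import Mathlib

open Filter ENNReal

/-- Denominators of the convergents: `q_n = ω_n q_{n-1} + q_{n-2}`, `q_{-1} = 0`, `q_0 = 1`. -/
def qRec (a : ℕ → ℕ) : ℕ → ℕ
  | 0 => 1
  | 1 => a 1
  | n + 2 => a (n + 2) * qRec a (n + 1) + qRec a n

/-- The continued fraction denominator `q_n(ω)` of a finite word `ω ∈ ℕ^n`. -/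
def wordQ {n : ℕ} (w : Fin n → ℕ+) : ℕ :=
  qRec (fun i => if h : 1 ≤ i ∧ i ≤ n then (w ⟨i - 1, by omega⟩ : ℕ) else 1) n

/-- The `n`-th partition function `Z_n(t,β) = ∑_{ω ∈ ℕ^n} q_n(ω)^{−2t} ∏ ω_i^{−2β}`,
valued in `[0,∞]`. -/
noncomputable def Zpart (t β : ℝ) (n : ℕ) : ℝ≥0∞ :=
  ∑' w : Fin n → ℕ+,
    ((wordQ w : ℝ≥0∞)) ^ (-2 * t) * ∏ i : Fin n, (((w i : ℕ) : ℝ≥0∞)) ^ (-2 * β)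

namespace PressureAux

open Matrix

/-! ### Continuants via 2×2 matrices -/

def cm (a : ℕ) : Matrix (Fin 2) (Fin 2) ℕ := !![a, 1; 1, 0]

def cmat (l : List ℕ) : Matrix (Fin 2) (Fin 2) ℕ := (l.map cm).prod

def cont (l : List ℕ) : ℕ := cmat l 0 0

lemma cmat_nil : cmat [] = 1 := rfl

lemma cmat_cons (a : ℕ) (l : List ℕ) : cmat (a :: l) = cm a * cmat l := by
  simp [cmat]

lemma cmat_append (l m : List ℕ) : cmat (l ++ m) = cmat l * cmat m := by
  simp [cmat]

lemma e00 (a : ℕ) (l : List ℕ) :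
    cmat (a :: l) 0 0 = a * cmat l 0 0 + cmat l 1 0 := by
  rw [cmat_cons]; simp [cm, Matrix.mul_apply, Fin.sum_univ_two]

lemma e01 (a : ℕ) (l : List ℕ) :
    cmat (a :: l) 0 1 = a * cmat l 0 1 + cmat l 1 1 := by
  rw [cmat_cons]; simp [cm, Matrix.mul_apply, Fin.sum_univ_two]

lemma e10 (a : ℕ) (l : List ℕ) : cmat (a :: l) 1 0 = cmat l 0 0 := by
  rw [cmat_cons]; simp [cm, Matrix.mul_apply, Fin.sum_univ_two]

lemma e11 (a : ℕ) (l : List ℕ) : cmat (a :: l) 1 1 = cmat l 0 1 := by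
  rw [cmat_cons]; simp [cm, Matrix.mul_apply, Fin.sum_univ_two]

lemma cmat_singleton (a : ℕ) : cmat [a] = cm a := by
  rw [cmat_cons, cmat_nil, mul_one]

lemma cont_singleton (a : ℕ) : cont [a] = a := by
  simp [cont, cmat_singleton, cm]

lemma entries_le : ∀ l : List ℕ, (∀ x ∈ l, 1 ≤ x) → l ≠ [] →
    cmat l 1 0 ≤ cmat l 0 0 ∧ cmat l 0 1 ≤ cmat l 0 0 ∧
      cmat l 1 1 ≤ cmat l 0 1 ∧ cmat l 1 1 ≤ cmat l 1 0
  | [], _, h => absurd rfl h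
  | [a], h, _ => by
    have ha : 1 ≤ a := h a (by simp)
    refine ⟨?_, ?_, ?_, ?_⟩ <;> simp [cmat_singleton, cm] <;> omega
  | a :: b :: l, h, _ => by
    have ha : 1 ≤ a := h a (by simp)
    obtain ⟨h1, h2, h3, h4⟩ :=
      entries_le (b :: l) (fun x hx => h x (by simp [hx])) (by simp)
    have E00 := e00 a (b :: l)
    have E01 := e01 a (b :: l)
    have E10 := e10 a (b :: l)
    have E11 := e11 a (b :: l)
    have m1 : cmat (b :: l) 0 0 ≤ a * cmat (b :: l) 0 0 := Nat.le_mul_of_pos_left _ ha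
    have m2 : cmat (b :: l) 0 1 ≤ a * cmat (b :: l) 0 1 := Nat.le_mul_of_pos_left _ ha
    have m3 : a * cmat (b :: l) 0 1 ≤ a * cmat (b :: l) 0 0 := Nat.mul_le_mul_left _ h2
    omega

lemma cont_bounds : ∀ l : List ℕ, (∀ x ∈ l, 1 ≤ x) →
    l.prod ≤ cmat l 0 0 ∧ cmat l 0 0 ≤ 2 ^ l.length * l.prod ∧
      cmat l 1 0 ≤ 2 ^ l.length * l.prod
  | [], _ => by simp [cmat_nil]
  | a :: l, h => by
    have ha : 1 ≤ a := h a (by simp)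
    obtain ⟨h1, h2, h3⟩ := cont_bounds l (fun x hx => h x (by simp [hx]))
    rw [e00, e10]
    have key : a * cmat l 0 0 + cmat l 1 0 ≤ 2 ^ (a :: l).length * (a :: l).prod := by
      calc a * cmat l 0 0 + cmat l 1 0
          ≤ a * (2 ^ l.length * l.prod) + 2 ^ l.length * l.prod :=
            add_le_add (Nat.mul_le_mul_left _ h2) h3
        _ ≤ a * (2 ^ l.length * l.prod) + a * (2 ^ l.length * l.prod) :=
            add_le_add_right (Nat.le_mul_of_pos_left _ ha) _
        _ = 2 ^ (a :: l).length * (a :: l).prod := by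
            simp [List.length_cons, List.prod_cons, pow_succ]; ring
    refine ⟨?_, key, ?_⟩
    · calc (a :: l).prod = a * l.prod + 0 := by simp [List.prod_cons]
        _ ≤ a * cmat l 0 0 + cmat l 1 0 :=
          add_le_add (Nat.mul_le_mul_left _ h1) (Nat.zero_le _)
    · calc cmat l 0 0 ≤ 2 ^ l.length * l.prod := h2
        _ ≤ 2 ^ (a :: l).length * (a :: l).prod := by
            simp [List.length_cons, List.prod_cons, pow_succ]
            nlinarith [Nat.one_le_two_pow (n := l.length), l.prod.zero_le,
              (cmat l 0 0).zero_le]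

lemma cont_append_bounds (l m : List ℕ) (hl1 : ∀ x ∈ l, 1 ≤ x) (hm1 : ∀ x ∈ m, 1 ≤ x)
    (hl : l ≠ []) (hm : m ≠ []) :
    cont l * cont m ≤ cont (l ++ m) ∧ cont (l ++ m) ≤ 2 * (cont l * cont m) := by
  have hsplit : cont (l ++ m) = cmat l 0 0 * cmat m 0 0 + cmat l 0 1 * cmat m 1 0 := by
    unfold cont
    rw [cmat_append, Matrix.mul_apply, Fin.sum_univ_two]
  obtain ⟨hl10, hl01, -, -⟩ := entries_le l hl1 hl
  obtain ⟨hm10, hm01, -, -⟩ := entries_le m hm1 hm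
  constructor
  · rw [hsplit]; exact Nat.le_add_right _ _
  · rw [hsplit, two_mul]
    exact add_le_add le_rfl (Nat.mul_le_mul hl01 hm10)

lemma cm_transpose (a : ℕ) : (cm a)ᵀ = cm a := by
  ext i j
  fin_cases i <;> fin_cases j <;> simp [cm]

lemma cmat_reverse (l : List ℕ) : cmat l.reverse = (cmat l)ᵀ := by
  have hmap : (l.map cm).map Matrix.transpose = l.map cm := by
    simp [List.map_map, Function.comp_def, cm_transpose]
  calc cmat l.reverse = ((l.map cm).reverse).prod := by rw [cmat, List.map_reverse]
    _ = (((l.map cm).map Matrix.transpose).reverse).prod := by rw [hmap]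
    _ = ((l.map cm).prod)ᵀ := (Matrix.transpose_list_prod _).symm
    _ = (cmat l)ᵀ := rfl

lemma cont_reverse (l : List ℕ) : cont l.reverse = cont l := by
  unfold cont
  rw [cmat_reverse, Matrix.transpose_apply]

/-! ### `wordQ` as a continuant -/

lemma cont_cons_cons (x b : ℕ) (l : List ℕ) :
    cont (x :: b :: l) = x * cont (b :: l) + cont l := by
  unfold cont
  rw [e00, e10]

lemma qRec_cont (a : ℕ → ℕ) : ∀ n, qRec a n = cont (List.ofFn fun i : Fin n => a (n - (i : ℕ))) := by
  intro n
  induction n using Nat.strong_induction_on with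
  | _ n ih =>
    match n with
    | 0 => simp [qRec, cont, cmat, List.ofFn_zero]
    | 1 =>
      rw [qRec]
      simp [List.ofFn_succ, cont_singleton]
    | (n + 2) =>
      have hlist : (List.ofFn fun i : Fin (n + 2) => a (n + 2 - (i : ℕ)))
          = a (n + 2) :: a (n + 1) :: List.ofFn (fun i : Fin n => a (n - (i : ℕ))) := by
        apply List.ext_getElem
        · simp
        · intro i h1 h2
          match i with
          | 0 => simp
          | 1 => simp
          | (i + 2) =>
            simp only [List.getElem_ofFn, List.getElem_cons_succ]
            congr 1
            omega
      rw [hlist, cont_cons_cons, qRec]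
      have h1 : (List.ofFn fun i : Fin (n + 1) => a (n + 1 - (i : ℕ)))
          = a (n + 1) :: List.ofFn (fun i : Fin n => a (n - (i : ℕ))) := by
        apply List.ext_getElem
        · simp
        · intro i h1 h2
          match i with
          | 0 => simp
          | (i + 1) =>
            simp only [List.getElem_ofFn, List.getElem_cons_succ]
            congr 1
            omega
      rw [ih (n + 1) (by omega), ih n (by omega), h1]

def wl {n : ℕ} (w : Fin n → ℕ+) : List ℕ := List.ofFn fun i => (w i : ℕ)

lemma wordQ_cont {n : ℕ} (w : Fin n → ℕ+) : wordQ w = cont (wl w) := by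
  rw [wordQ, qRec_cont]
  rw [← cont_reverse (wl w)]
  congr 1
  apply List.ext_getElem
  · simp [wl]
  · intro i h1 h2
    rw [List.length_ofFn] at h1
    simp only [List.getElem_ofFn]
    have hc : 1 ≤ n - i ∧ n - i ≤ n := by omega
    rw [dif_pos hc]
    have h3 : i < (wl w).length := by simpa [wl] using h2
    rw [List.getElem_reverse]
    simp only [wl, List.getElem_ofFn, List.length_ofFn]
    congr 1
    congr 1
    apply Fin.ext
    show n - i - 1 = n - 1 - i
    omega

lemma wl_entries {n : ℕ} (w : Fin n → ℕ+) : ∀ x ∈ wl w, 1 ≤ x := by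
  intro x hx
  simp only [wl, List.mem_ofFn] at hx
  obtain ⟨i, rfl⟩ := hx
  exact (w i).one_le

lemma wordQ_bounds {n : ℕ} (w : Fin n → ℕ+) :
    (∏ i, (w i : ℕ)) ≤ wordQ w ∧ wordQ w ≤ 2 ^ n * ∏ i, (w i : ℕ) := by
  obtain ⟨h1, h2, -⟩ := cont_bounds (wl w) (wl_entries w)
  rw [wordQ_cont]
  have hp : (wl w).prod = ∏ i, (w i : ℕ) := List.prod_ofFn
  have hl : (wl w).length = n := by simp [wl]
  rw [hp, hl] at h2
  rw [hp] at h1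
  exact ⟨h1, h2⟩

lemma one_le_prod_w {n : ℕ} (w : Fin n → ℕ+) : 1 ≤ ∏ i, (w i : ℕ) :=
  Finset.one_le_prod' (fun i _ => (w i).one_le)

lemma one_le_wordQ {n : ℕ} (w : Fin n → ℕ+) : 1 ≤ wordQ w :=
  le_trans (one_le_prod_w w) (wordQ_bounds w).1

lemma wl_append {n m : ℕ} (x : Fin n → ℕ+) (y : Fin m → ℕ+) :
    wl (Fin.append x y) = wl x ++ wl y := by
  unfold wl
  rw [← List.ofFn_fin_append]
  congr 1
  funext i
  refine Fin.addCases (fun j => ?_) (fun j => ?_) i <;>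
    simp [Fin.append_left, Fin.append_right]

lemma wordQ_append_bounds {n m : ℕ} (hn : n ≠ 0) (hm : m ≠ 0)
    (x : Fin n → ℕ+) (y : Fin m → ℕ+) :
    wordQ x * wordQ y ≤ wordQ (Fin.append x y) ∧
      wordQ (Fin.append x y) ≤ 2 * (wordQ x * wordQ y) := by
  rw [wordQ_cont, wordQ_cont, wordQ_cont, wl_append]
  exact cont_append_bounds _ _ (wl_entries x) (wl_entries y)
    (by simp [wl]; omega) (by simp [wl]; omega)

/-! ### ENNReal estimates -/

lemma rpow_le_rpow_nonpos {x y : ℝ≥0∞} {z : ℝ} (hxy : x ≤ y) (hz : z ≤ 0) :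
    y ^ z ≤ x ^ z := by
  rw [← neg_neg z, ENNReal.rpow_neg y, ENNReal.rpow_neg x]
  exact ENNReal.inv_le_inv.2 (ENNReal.rpow_le_rpow hxy (neg_nonneg.2 hz))

lemma two_rpow_ne_top {y : ℝ} : (2 : ℝ≥0∞) ^ y ≠ ⊤ := by
  rcases le_total 0 y with h | h
  · exact ENNReal.rpow_ne_top_of_nonneg h (by norm_num)
  · rw [← neg_neg y, ENNReal.rpow_neg]
    exact ENNReal.inv_ne_top.2 (ENNReal.rpow_pos (by norm_num) (by norm_num)).ne'

lemma two_rpow_le_one {z : ℝ} (hz : z ≤ 0) : (2 : ℝ≥0∞) ^ z ≤ 1 := by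
  rcases hz.lt_or_eq with h | h
  · exact ENNReal.rpow_le_one_of_one_le_of_neg (by norm_num) h
  · rw [h, ENNReal.rpow_zero]

lemma rpow_bound {t : ℝ} {q P n : ℕ} (hP : 1 ≤ P) (h1 : P ≤ q) (h2 : q ≤ 2 ^ n * P) :
    (q : ℝ≥0∞) ^ (-2 * t) ≤ (2 : ℝ≥0∞) ^ (2 * |t| * (n : ℝ)) * (P : ℝ≥0∞) ^ (-2 * t) := by
  have hcast : ((2 ^ n * P : ℕ) : ℝ≥0∞) = (2 : ℝ≥0∞) ^ (n : ℝ) * (P : ℝ≥0∞) := by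
    push_cast
    rw [ENNReal.rpow_natCast]
  rcases le_total 0 t with ht | ht
  · have habs : |t| = t := abs_of_nonneg ht
    have hle : (q : ℝ≥0∞) ^ (-2 * t) ≤ (P : ℝ≥0∞) ^ (-2 * t) :=
      rpow_le_rpow_nonpos (by exact_mod_cast h1) (by nlinarith)
    have hone : (1 : ℝ≥0∞) ≤ (2 : ℝ≥0∞) ^ (2 * |t| * (n : ℝ)) := by
      rw [← ENNReal.one_rpow (2 * |t| * (n : ℝ))]
      exact ENNReal.rpow_le_rpow (by norm_num) (by positivity)
    calc (q : ℝ≥0∞) ^ (-2 * t) ≤ (P : ℝ≥0∞) ^ (-2 * t) := hle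
      _ = 1 * (P : ℝ≥0∞) ^ (-2 * t) := (one_mul _).symm
      _ ≤ (2 : ℝ≥0∞) ^ (2 * |t| * (n : ℝ)) * (P : ℝ≥0∞) ^ (-2 * t) :=
          mul_le_mul_left hone _
  · have habs : |t| = -t := abs_of_nonpos ht
    have hq2 : (q : ℝ≥0∞) ≤ (2 : ℝ≥0∞) ^ (n : ℝ) * (P : ℝ≥0∞) := by
      rw [← hcast]; exact_mod_cast h2
    calc (q : ℝ≥0∞) ^ (-2 * t)
        ≤ ((2 : ℝ≥0∞) ^ (n : ℝ) * (P : ℝ≥0∞)) ^ (-2 * t) :=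
          ENNReal.rpow_le_rpow hq2 (by nlinarith)
      _ = ((2 : ℝ≥0∞) ^ (n : ℝ)) ^ (-2 * t) * (P : ℝ≥0∞) ^ (-2 * t) :=
          ENNReal.mul_rpow_of_ne_top
            (by apply ENNReal.rpow_ne_top_of_nonneg (by positivity); norm_num)
            (ENNReal.natCast_ne_top _) _
      _ = (2 : ℝ≥0∞) ^ (2 * |t| * (n : ℝ)) * (P : ℝ≥0∞) ^ (-2 * t) := by
          rw [← ENNReal.rpow_mul]
          congr 1
          rw [habs]; ring

lemma rpow_bound_ge {t : ℝ} {q P n : ℕ} (hP : 1 ≤ P) (h1 : P ≤ q) (h2 : q ≤ 2 ^ n * P) :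
    (2 : ℝ≥0∞) ^ (-(2 * |t|) * (n : ℝ)) * (P : ℝ≥0∞) ^ (-2 * t) ≤ (q : ℝ≥0∞) ^ (-2 * t) := by
  have hcast : ((2 ^ n * P : ℕ) : ℝ≥0∞) = (2 : ℝ≥0∞) ^ (n : ℝ) * (P : ℝ≥0∞) := by
    push_cast
    rw [ENNReal.rpow_natCast]
  rcases le_total 0 t with ht | ht
  · have habs : |t| = t := abs_of_nonneg ht
    have hq2 : (q : ℝ≥0∞) ≤ (2 : ℝ≥0∞) ^ (n : ℝ) * (P : ℝ≥0∞) := by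
      rw [← hcast]; exact_mod_cast h2
    calc (2 : ℝ≥0∞) ^ (-(2 * |t|) * (n : ℝ)) * (P : ℝ≥0∞) ^ (-2 * t)
        = ((2 : ℝ≥0∞) ^ (n : ℝ)) ^ (-2 * t) * (P : ℝ≥0∞) ^ (-2 * t) := by
          rw [← ENNReal.rpow_mul]
          congr 2
          rw [habs]; ring
      _ = ((2 : ℝ≥0∞) ^ (n : ℝ) * (P : ℝ≥0∞)) ^ (-2 * t) :=
          (ENNReal.mul_rpow_of_ne_top
            (by apply ENNReal.rpow_ne_top_of_nonneg (by positivity); norm_num)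
            (ENNReal.natCast_ne_top _) _).symm
      _ ≤ (q : ℝ≥0∞) ^ (-2 * t) :=
          rpow_le_rpow_nonpos hq2 (by nlinarith)
  · have habs : |t| = -t := abs_of_nonpos ht
    have hone : (2 : ℝ≥0∞) ^ (-(2 * |t|) * (n : ℝ)) ≤ 1 := by
      apply two_rpow_le_one
      have : (0:ℝ) ≤ 2 * |t| * (n : ℝ) := by positivity
      nlinarith
    calc (2 : ℝ≥0∞) ^ (-(2 * |t|) * (n : ℝ)) * (P : ℝ≥0∞) ^ (-2 * t)
        ≤ 1 * (P : ℝ≥0∞) ^ (-2 * t) := mul_le_mul_left hone _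
      _ = (P : ℝ≥0∞) ^ (-2 * t) := one_mul _
      _ ≤ (q : ℝ≥0∞) ^ (-2 * t) :=
          ENNReal.rpow_le_rpow (by exact_mod_cast h1) (by nlinarith)

lemma tsum_pi_prod (g : ℕ+ → ℝ≥0∞) : ∀ n, (∑' w : Fin n → ℕ+, ∏ i, g (w i)) = (∑' k, g k) ^ n := by
  intro n
  induction n with
  | zero =>
    rw [pow_zero]
    rw [tsum_eq_single (fun i => (1 : ℕ+)) (fun b hb => absurd (Subsingleton.elim b _) hb)]
    simp
  | succ n ih =>
    set e := Fin.consEquiv (fun _ : Fin (n + 1) => ℕ+) with he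
    rw [← Equiv.tsum_eq e, ENNReal.tsum_prod']
    have hpt : ∀ (x : ℕ+) (p : Fin n → ℕ+),
        (∏ i, g ((e (x, p)) i)) = g x * ∏ i, g (p i) := by
      intro x p
      rw [Fin.prod_univ_succ]
      simp [he, Fin.consEquiv]
    calc (∑' (x : ℕ+) (p : Fin n → ℕ+), ∏ i, g ((e (x, p)) i))
        = ∑' (x : ℕ+) (p : Fin n → ℕ+), g x * ∏ i, g (p i) := by
          congr 1; funext x; congr 1; funext p; exact hpt x p
      _ = ∑' (x : ℕ+), g x * ∑' (p : Fin n → ℕ+), ∏ i, g (p i) := by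
          congr 1; funext x; exact ENNReal.tsum_mul_left
      _ = (∑' (p : Fin n → ℕ+), ∏ i, g (p i)) * ∑' (x : ℕ+), g x := by
          rw [ENNReal.tsum_mul_right]; ring
      _ = (∑' k, g k) ^ (n + 1) := by rw [ih, pow_succ]

/-! ### The partition function -/

lemma Zpart_zero (t β : ℝ) : Zpart t β 0 = 1 := by
  rw [Zpart]
  have h1 : ∀ w : Fin 0 → ℕ+,
      ((wordQ w : ℝ≥0∞)) ^ (-2 * t) * ∏ i : Fin 0, (((w i : ℕ) : ℝ≥0∞)) ^ (-2 * β) = 1 := by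
    intro w
    have hq : wordQ w = 1 := by
      rw [wordQ_cont]
      simp [wl, cont, cmat, List.ofFn_zero, Matrix.one_apply]
    rw [hq]
    simp
  rw [tsum_congr h1]
  exact tsum_eq_single (fun i => (1 : ℕ+)) (fun b hb => absurd (Subsingleton.elim b _) hb)

lemma wordQ_fin_one (w : Fin 1 → ℕ+) : wordQ w = (w 0 : ℕ) := by
  rw [wordQ_cont]
  have hw : wl w = [(w 0 : ℕ)] := by simp [wl, List.ofFn_succ]
  rw [hw, cont_singleton]

lemma Zpart_one_eq (t β : ℝ) :
    Zpart t β 1 = ∑' k : ℕ+, ((k : ℕ) : ℝ≥0∞) ^ (-(2 * (t + β))) := by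
  rw [Zpart, ← Equiv.tsum_eq (Equiv.funUnique (Fin 1) ℕ+).symm]
  apply tsum_congr
  intro k
  have hw : (Equiv.funUnique (Fin 1) ℕ+).symm k = fun _ => k := rfl
  rw [hw, wordQ_fin_one, Fin.prod_univ_one]
  have hk0 : ((k : ℕ) : ℝ≥0∞) ≠ 0 := by
    exact_mod_cast Nat.cast_ne_zero.2 k.ne_zero
  rw [← ENNReal.rpow_add _ _ hk0 (ENNReal.natCast_ne_top _)]
  congr 1
  ring

lemma S_ne_top_iff (x : ℝ) :
    (∑' k : ℕ+, ((k : ℕ) : ℝ≥0∞) ^ (-x)) ≠ ⊤ ↔ 1 < x := by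
  have h1 : ∀ k : ℕ+, ((k : ℕ) : ℝ≥0∞) ^ (-x) = ((((k : ℕ) : NNReal) ^ (-x) : NNReal) : ℝ≥0∞) := by
    intro k
    rw [ENNReal.coe_rpow_of_ne_zero (by exact_mod_cast k.ne_zero)]
    norm_num
  rw [tsum_congr h1, ENNReal.tsum_coe_ne_top_iff_summable, ← NNReal.summable_coe]
  have h2 : ∀ k : ℕ+, ((((k : ℕ) : NNReal) ^ (-x) : NNReal) : ℝ) = ((k : ℕ) : ℝ) ^ (-x) := by
    intro k
    rw [NNReal.coe_rpow]
    norm_num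
  rw [summable_congr h2]
  have h3 : Summable (fun k : ℕ+ => ((k : ℕ) : ℝ) ^ (-x))
      ↔ Summable (fun n : ℕ => (((n : ℕ) : ℝ) + 1) ^ (-x)) := by
    rw [← Equiv.summable_iff Equiv.pnatEquivNat.symm]
    apply summable_congr
    intro n
    have hn : ((Equiv.pnatEquivNat.symm n : ℕ+) : ℕ) = n + 1 := by
      simp [Equiv.pnatEquivNat, Nat.succPNat]
    simp only [Function.comp_apply, hn]
    congr 1
    push_cast
    ring
  rw [h3]
  have h4 : Summable (fun n : ℕ => (((n : ℕ) : ℝ) + 1) ^ (-x))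
      ↔ Summable (fun n : ℕ => ((n : ℕ) : ℝ) ^ (-x)) := by
    rw [← summable_nat_add_iff (f := fun n : ℕ => ((n : ℕ) : ℝ) ^ (-x)) 1]
    apply summable_congr
    intro n
    congr 1
    push_cast
    ring
  rw [h4, Real.summable_nat_rpow]
  constructor <;> intro <;> linarith

lemma Zpart_le_pow (t β : ℝ) (n : ℕ) :
    Zpart t β n ≤ (2 : ℝ≥0∞) ^ (2 * |t| * (n : ℝ)) *
      (∑' k : ℕ+, ((k : ℕ) : ℝ≥0∞) ^ (-(2 * (t + β)))) ^ n := by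
  rw [Zpart, ← tsum_pi_prod (fun k : ℕ+ => ((k : ℕ) : ℝ≥0∞) ^ (-(2 * (t + β)))) n,
    ← ENNReal.tsum_mul_left]
  apply ENNReal.tsum_le_tsum
  intro w
  have hb := wordQ_bounds w
  have hq := rpow_bound (t := t) (one_le_prod_w w) hb.1 hb.2
  calc (wordQ w : ℝ≥0∞) ^ (-2 * t) * ∏ i, ((w i : ℕ) : ℝ≥0∞) ^ (-2 * β)
      ≤ ((2 : ℝ≥0∞) ^ (2 * |t| * (n : ℝ)) * (((∏ i, (w i : ℕ)) : ℕ) : ℝ≥0∞) ^ (-2 * t)) *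
          ∏ i, ((w i : ℕ) : ℝ≥0∞) ^ (-2 * β) := mul_le_mul_left hq _
    _ = (2 : ℝ≥0∞) ^ (2 * |t| * (n : ℝ)) * ∏ i, ((w i : ℕ) : ℝ≥0∞) ^ (-(2 * (t + β))) := by
        rw [mul_assoc]
        congr 1
        have hcast : (((∏ i, (w i : ℕ)) : ℕ) : ℝ≥0∞) = ∏ i, ((w i : ℕ) : ℝ≥0∞) := by
          push_cast; rfl
        rw [hcast, ← ENNReal.prod_rpow_of_ne_top (fun i _ => ENNReal.natCast_ne_top _),
          ← Finset.prod_mul_distrib]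
        apply Finset.prod_congr rfl
        intro i _
        rw [← ENNReal.rpow_add _ _ (Nat.cast_ne_zero.2 (w i).ne_zero) (ENNReal.natCast_ne_top _)]
        congr 1
        ring

lemma Zpart_ge (t β : ℝ) (n : ℕ) :
    (2 : ℝ≥0∞) ^ (-(2 * |t|) * (n : ℝ)) ≤ Zpart t β n := by
  rw [Zpart]
  refine le_trans ?_ (ENNReal.le_tsum (fun _ => (1 : ℕ+)))
  set w : Fin n → ℕ+ := fun _ => 1 with hwdef
  have hb := wordQ_bounds w
  have hq := rpow_bound_ge (t := t) (one_le_prod_w w) hb.1 hb.2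
  have hprod : (∏ i, (w i : ℕ)) = 1 := by simp [hwdef]
  calc (2 : ℝ≥0∞) ^ (-(2 * |t|) * (n : ℝ))
      = (2 : ℝ≥0∞) ^ (-(2 * |t|) * (n : ℝ)) * (((∏ i, (w i : ℕ)) : ℕ) : ℝ≥0∞) ^ (-2 * t) := by
        rw [hprod]; simp
    _ ≤ (wordQ w : ℝ≥0∞) ^ (-2 * t) := hq
    _ = (wordQ w : ℝ≥0∞) ^ (-2 * t) * ∏ i : Fin n, ((w i : ℕ) : ℝ≥0∞) ^ (-2 * β) := by
        simp [hwdef]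

lemma Zpart_submul (t β : ℝ) {n m : ℕ} (hn : n ≠ 0) (hm : m ≠ 0) :
    Zpart t β (n + m) ≤ (2 : ℝ≥0∞) ^ (2 * |t|) * Zpart t β n * Zpart t β m := by
  have key : ∀ (x : Fin n → ℕ+) (y : Fin m → ℕ+),
      (wordQ (Fin.append x y) : ℝ≥0∞) ^ (-2 * t) *
          ∏ i : Fin (n + m), ((((Fin.append x y i : ℕ+) : ℕ)) : ℝ≥0∞) ^ (-2 * β)
        ≤ ((2 : ℝ≥0∞) ^ (2 * |t|) *
            ((wordQ x : ℝ≥0∞) ^ (-2 * t) * ∏ i, ((x i : ℕ) : ℝ≥0∞) ^ (-2 * β))) *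
            ((wordQ y : ℝ≥0∞) ^ (-2 * t) * ∏ i, ((y i : ℕ) : ℝ≥0∞) ^ (-2 * β)) := by
    intro x y
    obtain ⟨hl, hr⟩ := wordQ_append_bounds hn hm x y
    have h1 : 1 ≤ wordQ x * wordQ y := by
      have := Nat.mul_le_mul (one_le_wordQ x) (one_le_wordQ y)
      simpa using this
    have hq := rpow_bound (t := t) (n := 1) h1 hl (by simpa using hr)
    have hsplit : ((wordQ x * wordQ y : ℕ) : ℝ≥0∞) ^ (-2 * t)
        = (wordQ x : ℝ≥0∞) ^ (-2 * t) * (wordQ y : ℝ≥0∞) ^ (-2 * t) := by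
      push_cast
      exact ENNReal.mul_rpow_of_ne_top (ENNReal.natCast_ne_top _) (ENNReal.natCast_ne_top _) _
    have hprod : (∏ i : Fin (n + m), ((((Fin.append x y i : ℕ+) : ℕ)) : ℝ≥0∞) ^ (-2 * β))
        = (∏ i, ((x i : ℕ) : ℝ≥0∞) ^ (-2 * β)) * ∏ i, ((y i : ℕ) : ℝ≥0∞) ^ (-2 * β) := by
      rw [Fin.prod_univ_add]
      congr 1
      · exact Finset.prod_congr rfl fun i _ => by rw [Fin.append_left]
      · exact Finset.prod_congr rfl fun i _ => by rw [Fin.append_right]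
    calc (wordQ (Fin.append x y) : ℝ≥0∞) ^ (-2 * t) *
          ∏ i : Fin (n + m), ((((Fin.append x y i : ℕ+) : ℕ)) : ℝ≥0∞) ^ (-2 * β)
        ≤ ((2 : ℝ≥0∞) ^ (2 * |t| * ((1 : ℕ) : ℝ)) *
            ((wordQ x * wordQ y : ℕ) : ℝ≥0∞) ^ (-2 * t)) *
            ∏ i : Fin (n + m), ((((Fin.append x y i : ℕ+) : ℕ)) : ℝ≥0∞) ^ (-2 * β) :=
          mul_le_mul_left hq _
      _ = ((2 : ℝ≥0∞) ^ (2 * |t|) *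
            ((wordQ x : ℝ≥0∞) ^ (-2 * t) * ∏ i, ((x i : ℕ) : ℝ≥0∞) ^ (-2 * β))) *
            ((wordQ y : ℝ≥0∞) ^ (-2 * t) * ∏ i, ((y i : ℕ) : ℝ≥0∞) ^ (-2 * β)) := by
          rw [hsplit, hprod, Nat.cast_one, mul_one]
          ring
  calc Zpart t β (n + m)
      = ∑' (x : Fin n → ℕ+) (y : Fin m → ℕ+),
          (wordQ (Fin.append x y) : ℝ≥0∞) ^ (-2 * t) *
            ∏ i : Fin (n + m), ((((Fin.append x y i : ℕ+) : ℕ)) : ℝ≥0∞) ^ (-2 * β) := by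
        rw [Zpart, ← Equiv.tsum_eq (Fin.appendEquiv (α := ℕ+) n m), ENNReal.tsum_prod']
        simp only [Fin.appendEquiv_apply]
        rfl
    _ ≤ ∑' (x : Fin n → ℕ+) (y : Fin m → ℕ+),
          ((2 : ℝ≥0∞) ^ (2 * |t|) *
            ((wordQ x : ℝ≥0∞) ^ (-2 * t) * ∏ i, ((x i : ℕ) : ℝ≥0∞) ^ (-2 * β))) *
            ((wordQ y : ℝ≥0∞) ^ (-2 * t) * ∏ i, ((y i : ℕ) : ℝ≥0∞) ^ (-2 * β)) :=
        ENNReal.tsum_le_tsum fun x => ENNReal.tsum_le_tsum fun y => key x y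
    _ = (2 : ℝ≥0∞) ^ (2 * |t|) * Zpart t β n * Zpart t β m := by
        have e1 : ∀ x : Fin n → ℕ+,
            (∑' y : Fin m → ℕ+, ((2 : ℝ≥0∞) ^ (2 * |t|) *
              ((wordQ x : ℝ≥0∞) ^ (-2 * t) * ∏ i, ((x i : ℕ) : ℝ≥0∞) ^ (-2 * β))) *
              ((wordQ y : ℝ≥0∞) ^ (-2 * t) * ∏ i, ((y i : ℕ) : ℝ≥0∞) ^ (-2 * β)))
            = ((2 : ℝ≥0∞) ^ (2 * |t|) *
              ((wordQ x : ℝ≥0∞) ^ (-2 * t) * ∏ i, ((x i : ℕ) : ℝ≥0∞) ^ (-2 * β))) *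
              ∑' y : Fin m → ℕ+,
                (wordQ y : ℝ≥0∞) ^ (-2 * t) * ∏ i, ((y i : ℕ) : ℝ≥0∞) ^ (-2 * β) :=
          fun x => ENNReal.tsum_mul_left
        rw [tsum_congr e1, ENNReal.tsum_mul_right, ENNReal.tsum_mul_left, Zpart, Zpart]

end PressureAux

/-- The arithmetic-geometric pressure `P(t,β)` is finite iff `2(t+β) > 1`: the partition
functions are finite and `(1/n) log Z_n` converges to a real limit iff `2(t+β) > 1`. -/
theorem pressure_finite_iff (t β : ℝ) :
    ((∀ n, 1 ≤ n → Zpart t β n ≠ ⊤) ∧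
        ∃ L : ℝ, Tendsto (fun n : ℕ => Real.log (Zpart t β n).toReal / n) atTop (nhds L))
      ↔ 1 < 2 * (t + β) := by
  constructor
  · rintro ⟨hfin, -⟩
    have h1 := hfin 1 le_rfl
    rw [PressureAux.Zpart_one_eq] at h1
    exact (PressureAux.S_ne_top_iff _).1 h1
  · intro h
    have hSt : (∑' k : ℕ+, ((k : ℕ) : ℝ≥0∞) ^ (-(2 * (t + β)))) ≠ ⊤ :=
      (PressureAux.S_ne_top_iff _).2 h
    have hfin : ∀ n : ℕ, Zpart t β n ≠ ⊤ := by
      intro n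
      refine ne_top_of_le_ne_top ?_ (PressureAux.Zpart_le_pow t β n)
      exact ENNReal.mul_ne_top PressureAux.two_rpow_ne_top (ENNReal.pow_ne_top hSt)
    have hpos : ∀ n : ℕ, Zpart t β n ≠ 0 := by
      intro n
      have hp : (0 : ℝ≥0∞) < (2 : ℝ≥0∞) ^ (-(2 * |t|) * (n : ℝ)) :=
        ENNReal.rpow_pos (by norm_num) (by norm_num)
      exact (lt_of_lt_of_le hp (PressureAux.Zpart_ge t β n)).ne'
    set c : ℝ := 2 * |t| * Real.log 2 with hc
    have hlog2 : (0 : ℝ) ≤ Real.log 2 := Real.log_nonneg (by norm_num)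
    have hc0 : 0 ≤ c := by
      rw [hc]
      apply mul_nonneg (by positivity) hlog2
    set u : ℕ → ℝ := fun n => Real.log (Zpart t β n).toReal + c with hu
    have hu0 : u 0 = c := by simp [hu, PressureAux.Zpart_zero]
    have hlogle : ∀ {a b : ℕ}, a ≠ 0 → b ≠ 0 →
        Real.log (Zpart t β (a + b)).toReal
          ≤ c + Real.log (Zpart t β a).toReal + Real.log (Zpart t β b).toReal := by
      intro a b ha hb
      have hle := PressureAux.Zpart_submul t β ha hb
      have hKtop : ((2 : ℝ≥0∞) ^ (2 * |t|)) ≠ ⊤ := PressureAux.two_rpow_ne_top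
      have hpa := ENNReal.toReal_pos (hpos a) (hfin a)
      have hpb := ENNReal.toReal_pos (hpos b) (hfin b)
      have hpab := ENNReal.toReal_pos (hpos (a + b)) (hfin (a + b))
      have hKpos : 0 < ((2 : ℝ≥0∞) ^ (2 * |t|)).toReal :=
        ENNReal.toReal_pos (ENNReal.rpow_pos (by norm_num) (by norm_num)).ne' hKtop
      have h2 : (Zpart t β (a + b)).toReal
          ≤ ((2 : ℝ≥0∞) ^ (2 * |t|)).toReal * (Zpart t β a).toReal * (Zpart t β b).toReal := by
        rw [← ENNReal.toReal_mul, ← ENNReal.toReal_mul]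
        exact (ENNReal.toReal_le_toReal (hfin _)
          (ENNReal.mul_ne_top (ENNReal.mul_ne_top hKtop (hfin a)) (hfin b))).2 hle
      have hlog := Real.log_le_log hpab h2
      rw [Real.log_mul (by positivity) hpb.ne', Real.log_mul hKpos.ne' hpa.ne'] at hlog
      have hKlog : Real.log ((2 : ℝ≥0∞) ^ (2 * |t|)).toReal = c := by
        rw [← ENNReal.toReal_rpow, ENNReal.toReal_ofNat, Real.log_rpow (by norm_num)]
      linarith
    have hsub : Subadditive u := by
      intro a b
      rcases Nat.eq_zero_or_pos a with rfl | ha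
      · rw [zero_add, hu0]; linarith
      rcases Nat.eq_zero_or_pos b with rfl | hb
      · rw [add_zero, hu0]; linarith
      · have := hlogle ha.ne' hb.ne'
        simp only [hu]
        linarith
    have hlower : ∀ n : ℕ, n ≠ 0 → -c * n ≤ Real.log (Zpart t β n).toReal := by
      intro n hn
      have hge := PressureAux.Zpart_ge t β n
      have h2fin : ((2 : ℝ≥0∞) ^ (-(2 * |t|) * (n : ℝ))) ≠ ⊤ := PressureAux.two_rpow_ne_top
      have hlt : 0 < ((2 : ℝ≥0∞) ^ (-(2 * |t|) * (n : ℝ))).toReal :=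
        ENNReal.toReal_pos (ENNReal.rpow_pos (by norm_num) (by norm_num)).ne' h2fin
      have h3 : ((2 : ℝ≥0∞) ^ (-(2 * |t|) * (n : ℝ))).toReal ≤ (Zpart t β n).toReal :=
        (ENNReal.toReal_le_toReal h2fin (hfin n)).2 hge
      have h4 := Real.log_le_log hlt h3
      have h5 : Real.log ((2 : ℝ≥0∞) ^ (-(2 * |t|) * (n : ℝ))).toReal
          = -(2 * |t|) * (n : ℝ) * Real.log 2 := by
        rw [← ENNReal.toReal_rpow, ENNReal.toReal_ofNat, Real.log_rpow (by norm_num)]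
      rw [h5] at h4
      have : -c * (n : ℝ) = -(2 * |t|) * (n : ℝ) * Real.log 2 := by rw [hc]; ring
      linarith
    have hbdd : BddBelow (Set.range fun n : ℕ => u n / n) := by
      refine ⟨-c, ?_⟩
      rintro x ⟨n, rfl⟩
      rcases Nat.eq_zero_or_pos n with rfl | hn
      · simp [hu0]
        linarith
      · have hnR : (0 : ℝ) < n := by exact_mod_cast hn
        rw [le_div_iff₀ hnR]
        have h6 := hlower n hn.ne'
        simp only [hu]
        nlinarith
    refine ⟨fun n _ => hfin n, hsub.lim, ?_⟩
    have htend := hsub.tendsto_lim hbdd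
    have htend2 := tendsto_const_div_atTop_nhds_zero_nat c
    have h3 := htend.sub htend2
    rw [sub_zero] at h3
    apply h3.congr
    intro n
    rw [← sub_div]
    simp [hu]
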